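/- Fix δ ∈ (0,1). Let g_ε(t) = 2(1-ε)[(1+t²)Φ(-t) - tφ(t)] + ε(1+t²). Suppose ε* ∈ (0,1) is such that the equation g_{ε*}(t) = δ has a unique positive root t. Then for any ε ∈ (ε*, 1), g_ε(t) > δ for all t > 0, i.e., inf_{t>0} g_ε(t)/δ > 1. -/
import Mathlib

open MeasureTheory Set

noncomputable def stdNormalPDF (x : ℝ) : ℝ := Real.exp (-x ^ 2 / 2) / Real.sqrt (2 * Real.pi)

noncomputable def stdNormalCDF (x : ℝ) : ℝ := ∫ t in Set.Iic x, stdNormalPDF t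

lemma pdf_pos (x : ℝ) : 0 < stdNormalPDF x := by
  unfold stdNormalPDF; positivity

lemma pdf_le (x : ℝ) : stdNormalPDF x ≤ 1 := by
  unfold stdNormalPDF
  rw [div_le_one (Real.sqrt_pos.2 (by positivity))]
  calc Real.exp (-x ^ 2 / 2) ≤ 1 := Real.exp_le_one_iff.2 (by nlinarith [sq_nonneg x])
    _ ≤ Real.sqrt (2 * Real.pi) := by
        rw [show (1:ℝ) = Real.sqrt 1 by simp]
        exact Real.sqrt_le_sqrt (by nlinarith [Real.pi_gt_three])

lemma pdf_eq (x : ℝ) : stdNormalPDF x = Real.exp (-(1/2) * x ^ 2) * (Real.sqrt (2 * Real.pi))⁻¹ := by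
  unfold stdNormalPDF; ring_nf

lemma integrable_pdf : Integrable stdNormalPDF := by
  have h := (integrable_exp_neg_mul_sq (by norm_num : (0:ℝ) < 1/2)).mul_const (Real.sqrt (2 * Real.pi))⁻¹
  refine h.congr ?_
  filter_upwards with x
  rw [pdf_eq]

lemma integral_pdf : ∫ x, stdNormalPDF x = 1 := by
  have h : ∫ x, Real.exp (-(1/2) * x ^ 2) = Real.sqrt (Real.pi / (1/2)) := integral_gaussian (1/2)
  have h2 : ∫ x, stdNormalPDF x = (∫ x, Real.exp (-(1/2) * x ^ 2)) * (Real.sqrt (2 * Real.pi))⁻¹ := by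
    rw [← integral_mul_const]
    congr 1; ext x; rw [pdf_eq]
  rw [h2, h, show Real.pi / (1/2) = 2 * Real.pi by ring]
  have : (0:ℝ) < Real.sqrt (2 * Real.pi) := Real.sqrt_pos.2 (by positivity)
  field_simp

lemma cdf_zero : stdNormalCDF 0 = 1/2 := by
  have heven : ∀ x : ℝ, stdNormalPDF (-x) = stdNormalPDF x := by
    intro x; unfold stdNormalPDF; rw [neg_pow]; ring_nf
  have hsym : (∫ x in Iic (0:ℝ), stdNormalPDF x) = ∫ x in Ioi (0:ℝ), stdNormalPDF x := by
    have := integral_comp_neg_Iic (0:ℝ) stdNormalPDF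
    simp only [neg_zero] at this
    rw [← this]
    exact setIntegral_congr_fun measurableSet_Iic (fun x _ => (heven x).symm)
  have hadd : (∫ x in Iic (0:ℝ), stdNormalPDF x) + ∫ x in Ioi (0:ℝ), stdNormalPDF x = 1 := by
    rw [intervalIntegral.integral_Iic_add_Ioi integrable_pdf.integrableOn integrable_pdf.integrableOn]
    exact integral_pdf
  unfold stdNormalCDF
  linarith [hsym, hadd]

lemma cdf_eq (x : ℝ) : stdNormalCDF x = 1/2 + ∫ t in (0:ℝ)..x, stdNormalPDF t := by
  have := intervalIntegral.integral_Iic_sub_Iic (a := (0:ℝ)) (b := x) (μ := volume)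
    integrable_pdf.integrableOn integrable_pdf.integrableOn
  unfold stdNormalCDF
  have h0 := cdf_zero
  unfold stdNormalCDF at h0
  linarith [this]

lemma cdf_continuous : Continuous stdNormalCDF := by
  have h : Continuous fun b => ∫ t in (0:ℝ)..b, stdNormalPDF t :=
    intervalIntegral.continuous_primitive (fun a b => integrable_pdf.intervalIntegrable) 0
  have : stdNormalCDF = fun x => 1/2 + ∫ t in (0:ℝ)..x, stdNormalPDF t := funext cdf_eq
  rw [this]
  exact continuous_const.add h

lemma cdf_nonneg (x : ℝ) : 0 ≤ stdNormalCDF x :=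
  integral_nonneg (fun t => (pdf_pos t).le)

lemma cdf_lt_half {t : ℝ} (ht : 0 < t) : stdNormalCDF (-t) < 1/2 := by
  rw [cdf_eq]
  have : (0:ℝ) < ∫ s in (-t)..(0:ℝ), stdNormalPDF s := by
    apply intervalIntegral.intervalIntegral_pos_of_pos_on integrable_pdf.intervalIntegrable
      (fun s _ => pdf_pos s) (by linarith)
  rw [intervalIntegral.integral_symm]
  linarith

noncomputable def gfun (ε t : ℝ) : ℝ :=
  2 * (1 - ε) * ((1 + t ^ 2) * stdNormalCDF (-t) - t * stdNormalPDF t) + ε * (1 + t ^ 2)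

lemma gfun_continuous (ε : ℝ) : Continuous (gfun ε) := by
  have h1 : Continuous fun t : ℝ => stdNormalCDF (-t) := cdf_continuous.comp continuous_neg
  unfold gfun stdNormalPDF
  fun_prop

lemma gfun_zero (ε : ℝ) : gfun ε 0 = 1 := by
  unfold gfun
  rw [neg_zero, cdf_zero]
  ring

lemma gfun_mono {εa εb t : ℝ} (ht : 0 < t) (h : εa < εb) : gfun εa t < gfun εb t := by
  unfold gfun
  have h1 := cdf_lt_half ht
  have h2 := cdf_nonneg (-t)
  have h3 := pdf_pos t
  nlinarith [sq_nonneg t, mul_pos ht h3, mul_pos (by positivity : (0:ℝ) < 1 + t^2) (sub_pos.2 h1)]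

theorem above_DT_no_root (δ εstar : ℝ) (hδ : 0 < δ) (hδ1 : δ < 1)
    (hεs : 0 < εstar) (hεs1 : εstar < 1)
    (huniq : ∃! t : ℝ, 0 < t ∧ gfun εstar t = δ) :
    ∀ ε : ℝ, εstar < ε → ε < 1 → ∀ t : ℝ, 0 < t → δ < gfun ε t := by
  have key : ∀ t : ℝ, 0 < t → δ ≤ gfun εstar t := by
    by_contra hcon
    push_neg at hcon
    obtain ⟨t₀, ht₀, hlt⟩ := hcon
    set T : ℝ := max (t₀ + 1) ((δ + 3) / εstar) with hT
    have hT1 : t₀ + 1 ≤ T := le_max_left _ _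
    have hTge1 : 1 ≤ T := by linarith [le_max_left (t₀+1) ((δ+3)/εstar)]
    have hTpos : 0 < T := by linarith
    have hTε : δ + 3 ≤ εstar * T := by
      have := le_max_right (t₀ + 1) ((δ + 3) / εstar)
      rw [div_le_iff₀ hεs] at this
      linarith [this]
    have hgT : δ < gfun εstar T := by
      unfold gfun
      have h2 := cdf_nonneg (-T)
      have h3 := (pdf_pos T).le
      have h4 := pdf_le T
      have hb : -T * stdNormalPDF T ≥ -T := by nlinarith
      have hc : (0:ℝ) ≤ (1 + T^2) * stdNormalCDF (-T) := by positivity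
      have hd : 0 < 1 - εstar := by linarith
      have he : 2 * (1 - εstar) * ((1 + T ^ 2) * stdNormalCDF (-T) - T * stdNormalPDF T)
          ≥ -(2 * T) := by nlinarith
      have hf : εstar * (1 + T^2) ≥ (δ + 3) * T := by nlinarith
      nlinarith
    have hcont : ContinuousOn (gfun εstar) (Set.Icc 0 t₀) := (gfun_continuous εstar).continuousOn
    have hcont2 : ContinuousOn (gfun εstar) (Set.Icc t₀ T) := (gfun_continuous εstar).continuousOn
    have h1 : δ ∈ Set.Ioo (gfun εstar t₀) (gfun εstar 0) := by
      rw [gfun_zero]; exact ⟨hlt, hδ1⟩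
    obtain ⟨t₁, ht₁mem, ht₁⟩ := intermediate_value_Ioo' ht₀.le hcont h1
    have h2 : δ ∈ Set.Ioo (gfun εstar t₀) (gfun εstar T) := ⟨hlt, hgT⟩
    obtain ⟨t₂, ht₂mem, ht₂⟩ := intermediate_value_Ioo (by linarith) hcont2 h2
    obtain ⟨tr, -, hun⟩ := huniq
    have e1 : t₁ = tr := hun t₁ ⟨ht₁mem.1, ht₁⟩
    have e2 : t₂ = tr := hun t₂ ⟨lt_trans ht₀ ht₂mem.1, ht₂⟩
    have : t₁ < t₂ := lt_trans ht₁mem.2 ht₂mem.1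
    rw [e1, e2] at this
    exact lt_irrefl _ this
  intro ε hε hε1 t ht
  exact lt_of_le_of_lt (key t ht) (gfun_mono ht hε)
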